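/- Let (X,d) be a compact metric space, S a closed subset of X, and c > 0; for xi > 0 write S_xi = { x in X : dist(x,S) <= xi }. Let T : X -> X be a Borel measurable injective map that is continuous at every point of X \ S. Let M_{S,c} denote the set of Borel probability measures nu on X such that nu(S_xi) <= c*xi for all xi > 0. If (nu_n) is a sequence in M_{S,c} converging to a measure nu in the weak* topology (i.e. integrals of every continuous function converge), then the pushforward measures T_* nu_n converge to T_* nu in the weak* topology. -/

import Mathlib

open Set MeasureTheory Filter

lemma coe_liminf_eq {f : ℕ → NNReal} (hb : ∀ i, f i ≤ 1) :
    ((atTop.liminf f : NNReal) : ENNReal) = atTop.liminf (fun i => (f i : ENNReal)) := by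
  refine Monotone.map_liminf_of_continuousAt (F := atTop) ENNReal.coe_mono f
    ENNReal.continuous_coe.continuousAt ?_ ?_
  · exact IsBoundedUnder.isCoboundedUnder_ge ⟨1, eventually_map.2 (.of_forall hb)⟩
  · exact ⟨0, eventually_map.2 (.of_forall fun i => zero_le)⟩

/- STATEMENT 3: weak*-continuity of the pushforward by a map T, continuous off a closed
   singularity set S, along sequences of probability measures giving mass ≤ c·ξ to the
   ξ-neighborhood of S. -/
theorem stmt_3 {X : Type*} [MetricSpace X] [CompactSpace X]
    [MeasurableSpace X] [BorelSpace X]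
    (S : Set X) (hS : IsClosed S) (c : ℝ) (hc : 0 < c)
    (T : X → X) (hTmeas : Measurable T) (hTinj : Function.Injective T)
    (hTcont : ∀ x ∉ S, ContinuousAt T x)
    (ν : ℕ → Measure X) (μ : Measure X)
    [∀ n, IsProbabilityMeasure (ν n)] [IsProbabilityMeasure μ]
    (hν : ∀ n : ℕ, ∀ ξ : ℝ, 0 < ξ →
      ν n {x | Metric.infDist x S ≤ ξ} ≤ ENNReal.ofReal (c * ξ))
    (hconv : ∀ f : C(X, ℝ),
      Tendsto (fun n => ∫ x, f x ∂(ν n)) atTop (nhds (∫ x, f x ∂μ))) :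
    ∀ f : C(X, ℝ),
      Tendsto (fun n => ∫ x, f x ∂((ν n).map T)) atTop (nhds (∫ x, f x ∂(μ.map T))) := by
  -- Package as probability measures
  set P : ℕ → ProbabilityMeasure X := fun n => ⟨ν n, inferInstance⟩ with hP
  set Q : ProbabilityMeasure X := ⟨μ, inferInstance⟩ with hQ
  have hPQ : Tendsto P atTop (nhds Q) := by
    refine ProbabilityMeasure.tendsto_iff_forall_integral_tendsto.mpr fun f => ?_
    exact hconv f.toContinuousMap
  -- μ S = 0
  have hμS : μ S = 0 := by
    have key : ∀ ξ : ℝ, 0 < ξ → μ S ≤ ENNReal.ofReal (c * ξ) := by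
      intro ξ hξ
      have hopen : IsOpen {x : X | Metric.infDist x S < ξ} :=
        isOpen_lt (Metric.continuous_infDist_pt S) continuous_const
      have hsub : S ⊆ {x : X | Metric.infDist x S < ξ} := fun x hx => by
        simp only [mem_setOf_eq, Metric.infDist_zero_of_mem hx]; exact hξ
      have h1 : μ S ≤ μ {x : X | Metric.infDist x S < ξ} := measure_mono hsub
      have h2 : (μ : Measure X) {x : X | Metric.infDist x S < ξ} ≤
          atTop.liminf fun n => (ν n : Measure X) {x : X | Metric.infDist x S < ξ} :=
        ProbabilityMeasure.le_liminf_measure_open_of_tendsto hPQ hopen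
      have h3 : (atTop.liminf fun n => (ν n : Measure X) {x : X | Metric.infDist x S < ξ})
          ≤ ENNReal.ofReal (c * ξ) := by
        refine liminf_le_of_le ⟨0, .of_forall fun i => zero_le⟩ ?_
        intro b hb
        obtain ⟨n, hn⟩ := hb.exists
        calc b ≤ ν n {x : X | Metric.infDist x S < ξ} := hn
          _ ≤ ν n {x : X | Metric.infDist x S ≤ ξ} :=
            measure_mono (setOf_subset_setOf.mpr fun x => le_of_lt)
          _ ≤ ENNReal.ofReal (c * ξ) := hν n ξ hξ
      exact h1.trans (h2.trans h3)
    by_contra h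
    have hpos : 0 < μ S := pos_iff_ne_zero.mpr h
    have hfin : μ S ≠ ⊤ := (measure_lt_top μ S).ne
    set ξ := (μ S).toReal / (2 * c) with hξdef
    have hξpos : 0 < ξ := div_pos (ENNReal.toReal_pos h hfin) (by linarith)
    have := key ξ hξpos
    have hlt : ENNReal.ofReal (c * ξ) < μ S := by
      rw [hξdef]
      have : c * ((μ S).toReal / (2 * c)) = (μ S).toReal / 2 := by
        field_simp
      rw [this]
      have h2 : (μ S).toReal / 2 < (μ S).toReal := by
        have := ENNReal.toReal_pos h hfin; linarith
      calc ENNReal.ofReal ((μ S).toReal / 2) < ENNReal.ofReal ((μ S).toReal) :=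
            (ENNReal.ofReal_lt_ofReal_iff (ENNReal.toReal_pos h hfin)).mpr h2
        _ = μ S := ENNReal.ofReal_toReal hfin
    exact absurd this (not_le_of_gt hlt)
  -- closed-set limsup condition for pushforwards
  have hclosed : ∀ F : Set X, IsClosed F →
      (atTop.limsup fun n => (ν n : Measure X) (T ⁻¹' F)) ≤ μ (T ⁻¹' F) := by
    intro F hF
    have hclsub : closure (T ⁻¹' F) ⊆ T ⁻¹' F ∪ S := by
      intro x hx
      by_cases hxS : x ∈ S
      · exact Or.inr hxS
      · left
        have hc := (hTcont x hxS).continuousWithinAt (s := T ⁻¹' F)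
        have : T x ∈ closure (T '' (T ⁻¹' F)) := hc.mem_closure_image hx
        have h2 : closure (T '' (T ⁻¹' F)) ⊆ closure F :=
          closure_mono (image_preimage_subset T F)
        rw [hF.closure_eq] at h2
        exact h2 this
    calc (atTop.limsup fun n => (ν n : Measure X) (T ⁻¹' F))
        ≤ atTop.limsup fun n => (ν n : Measure X) (closure (T ⁻¹' F)) :=
          limsup_le_limsup (.of_forall fun n => measure_mono subset_closure)
      _ ≤ μ (closure (T ⁻¹' F)) :=
          ProbabilityMeasure.limsup_measure_closed_le_of_tendsto hPQ isClosed_closure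
      _ ≤ μ (T ⁻¹' F ∪ S) := measure_mono hclsub
      _ ≤ μ (T ⁻¹' F) + μ S := measure_union_le _ _
      _ = μ (T ⁻¹' F) := by rw [hμS, add_zero]
  -- pushforward probability measures
  haveI : ∀ n, IsProbabilityMeasure ((ν n).map T) :=
    fun n => Measure.isProbabilityMeasure_map hTmeas.aemeasurable
  haveI : IsProbabilityMeasure (μ.map T) := Measure.isProbabilityMeasure_map hTmeas.aemeasurable
  set P' : ℕ → ProbabilityMeasure X := fun n => ⟨(ν n).map T, inferInstance⟩ with hP'
  set Q' : ProbabilityMeasure X := ⟨μ.map T, inferInstance⟩ with hQ'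
  have hPQ' : Tendsto P' atTop (nhds Q') := by
    apply tendsto_of_forall_isOpen_le_liminf
    intro G hG
    -- ENNReal inequality
    have hE : (Q' : Measure X) G ≤ atTop.liminf fun n => (P' n : Measure X) G := by
      have hmap : ∀ (m : Measure X), (m.map T) G = m (T ⁻¹' G) := fun m =>
        Measure.map_apply hTmeas hG.measurableSet
      have hclos := hclosed Gᶜ hG.isClosed_compl
      have := le_measure_liminf_of_limsup_measure_compl_le
        (μ := μ.map T) (μs := fun n => (ν n).map T) (E := G)
        hG.measurableSet (by
          rw [show (T ⁻¹' Gᶜ) = (T ⁻¹' G)ᶜ from rfl] at hclos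
          simpa [Measure.map_apply hTmeas hG.measurableSet.compl, preimage_compl] using hclos)
      simpa [hP', hQ'] using this
    -- convert to NNReal
    have hb : ∀ n, P' n G ≤ 1 := fun n => ProbabilityMeasure.apply_le_one _ _
    rw [← ENNReal.coe_le_coe, coe_liminf_eq hb]
    simpa [ProbabilityMeasure.ennreal_coeFn_eq_coeFn_toMeasure] using hE
  intro f
  have := ProbabilityMeasure.tendsto_iff_forall_integral_tendsto.mp hPQ'
    (BoundedContinuousFunction.mkOfCompact f)
  simpa [hP', hQ', BoundedContinuousFunction.mkOfCompact_apply] using this
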